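/- The number of Dyck paths with air pockets of length n satisfies the recurrence implied by the functional equation A(x) = x^2 + x^2 A(x) + x A(x) + x A(x)^2; equivalently, the sequence a_n (with a_0 = a_1 = 0, a_2 = 1) satisfies a_n = a_{n-2} + a_{n-1} + sum_{k=2}^{n-1} a_k * a_{n-1-k} for all n >= 3, plus the extra term [n = 2]. -/

import Mathlib

open PowerSeries

/-- A valid step sequence: each step is an up-step `1` or a down-step `-k` (`k ≥ 1`),
and no two down-steps are consecutive. -/
def GoodSteps (p : List ℤ) : Prop :=
  (∀ s ∈ p, s = 1 ∨ s ≤ -1) ∧ List.Chain' (fun a b => a = 1 ∨ b = 1) p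

/-- A Dyck path with air pockets: nonempty, valid steps, ends on the x-axis,
stays weakly above the x-axis. -/
def IsDAP (p : List ℤ) : Prop :=
  p ≠ [] ∧ GoodSteps p ∧ p.sum = 0 ∧ ∀ i, 0 ≤ (p.take i).sum

/-- A grand Dyck path with air pockets: valid steps, ends on the x-axis
(possibly going below it); the empty path is allowed. -/
def IsGDAP (p : List ℤ) : Prop := GoodSteps p ∧ p.sum = 0

/-- Number of DAP of length `n`. -/
noncomputable def dapCount (n : ℕ) : ℕ :=
  Nat.card {p : List ℤ // IsDAP p ∧ p.length = n}

/- ### Auxiliary definitions -/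

/-- possibly-empty DAP -/
def WDAP (p : List ℤ) : Prop := GoodSteps p ∧ p.sum = 0 ∧ ∀ i, 0 ≤ (p.take i).sum

def Sset (n : ℕ) : Set (List ℤ) := {p | IsDAP p ∧ p.length = n}

def Eset (n : ℕ) : Set (List ℤ) := {p | WDAP p ∧ p.length = n}

/-- primitive DAPs: strictly positive strictly inside -/
def Pset (n : ℕ) : Set (List ℤ) :=
  {p | IsDAP p ∧ p.length = n ∧ ∀ i, 0 < i → i < p.length → 0 < (p.take i).sum}

lemma isDAP_iff (p : List ℤ) : IsDAP p ↔ p ≠ [] ∧ WDAP p := by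
  unfold IsDAP WDAP; tauto

lemma dapCount_eq (n : ℕ) : dapCount n = (Sset n).ncard := by
  rw [dapCount, ← Nat.card_coe_set_eq]; rfl

/- ### Finiteness -/

lemma finite_bdd (s : Set ℤ) (hs : s.Finite) (n : ℕ) :
    {l : List ℤ | l.length = n ∧ ∀ x ∈ l, x ∈ s}.Finite := by
  induction n with
  | zero =>
      apply Set.Finite.subset (Set.finite_singleton ([] : List ℤ))
      rintro l ⟨hl, -⟩
      simpa [List.length_eq_zero_iff] using hl
  | succ n ih =>
      apply Set.Finite.subset (Set.Finite.image2 (· :: ·) hs ih)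
      rintro l ⟨hl, hmem⟩
      match l with
      | [] => simp at hl
      | a :: t =>
          exact ⟨a, hmem a (by simp), t, ⟨by simpa using hl,
            fun x hx => hmem x (by simp [hx])⟩, rfl⟩

lemma wdap_steps_bdd {p : List ℤ} (h : WDAP p) {x : ℤ} (hx : x ∈ p) :
    x ∈ Set.Icc (-(p.length : ℤ)) (p.length : ℤ) := by
  obtain ⟨u, v, rfl⟩ := List.append_of_mem hx
  have hmem := h.1.1
  have hsum : ∀ l : List ℤ, (∀ y ∈ l, y = 1 ∨ y ≤ -1) → l.sum ≤ l.length := by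
    intro l hl
    have := List.sum_le_card_nsmul l 1 (fun y hy => by rcases hl y hy with h | h <;> omega)
    simpa using this
  constructor
  · have h1 : (u ++ x :: v).take (u.length + 1) = u ++ [x] := by
      rw [List.take_append]
      simp
    have h2 := h.2.2 (u.length + 1)
    rw [h1, List.sum_append] at h2
    have h3 : u.sum ≤ u.length := hsum u (fun y hy => hmem y (by simp [hy]))
    have h4 : (u.length : ℤ) ≤ (u ++ x :: v).length := by simp; omega
    simp at h2
    omega
  · rcases hmem x hx with h1 | h1
    · have : 1 ≤ (u ++ x :: v).length := by simp; omega
      omega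
    · have : (0:ℤ) ≤ (u ++ x :: v).length := by positivity
      omega

lemma Eset_finite (n : ℕ) : (Eset n).Finite := by
  apply Set.Finite.subset (finite_bdd (Set.Icc (-(n:ℤ)) n) (Set.finite_Icc _ _) n)
  rintro p ⟨hp, hl⟩
  exact ⟨hl, fun x hx => by simpa [hl] using wdap_steps_bdd hp hx⟩

lemma Sset_subset_Eset (n : ℕ) : Sset n ⊆ Eset n := by
  rintro p ⟨hp, hl⟩; exact ⟨((isDAP_iff p).1 hp).2, hl⟩

lemma Pset_subset_Sset (n : ℕ) : Pset n ⊆ Sset n := by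
  rintro p ⟨hp, hl, -⟩; exact ⟨hp, hl⟩

lemma Sset_finite (n : ℕ) : (Sset n).Finite := (Eset_finite n).subset (Sset_subset_Eset n)
lemma Pset_finite (n : ℕ) : (Pset n).Finite := (Sset_finite n).subset (Pset_subset_Sset n)

/- ### Basic structure lemmas -/

/-- A nonempty weak DAP starts with an up-step. -/
lemma wdap_head {p : List ℤ} (h : WDAP p) (hne : p ≠ []) : ∃ t, p = 1 :: t := by
  obtain ⟨a, t, rfl⟩ := List.exists_cons_of_ne_nil hne
  have h1 := h.2.2 1
  simp [List.take_cons] at h1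
  rcases h.1.1 a (by simp) with h2 | h2
  · exact ⟨t, by rw [h2]⟩
  · omega

/-- A weak DAP of length ≥ 2 ends with `[1, d]`, `d ≤ -1`. -/
lemma wdap_last_two {p : List ℤ} (h : WDAP p) (hl : 2 ≤ p.length) :
    ∃ w d, p = w ++ [1, d] ∧ d ≤ -1 := by
  obtain ⟨w, c, d, rfl⟩ : ∃ w c d, p = w ++ [c, d] := by
    obtain ⟨d, l1, h1⟩ := List.exists_cons_of_ne_nil
      (l := p.reverse) (by simp; intro h; subst h; simp at hl)
    obtain ⟨c, w', h2⟩ := List.exists_cons_of_ne_nil (l := l1) (by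
      rintro rfl
      have := congrArg List.length h1
      simp at this
      omega)
    refine ⟨w'.reverse, c, d, ?_⟩
    have := congrArg List.reverse h1
    rw [h2] at this
    simpa using this
  have hd0 : d ∈ w ++ [c, d] := by simp
  have hdv : d = 1 ∨ d ≤ -1 := h.1.1 d hd0
  have htake : (w ++ [c, d]).take (w.length + 1) = w ++ [c] := by
    have : w ++ [c, d] = (w ++ [c]) ++ [d] := by simp
    rw [this, List.take_append_of_le_length (by simp)]
    have := (List.take_left : List.take (w ++ [c]).length ((w ++ [c]) ++ [d]) = w ++ [c])
    simp at this ⊢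
  have h1 := h.2.2 (w.length + 1)
  rw [htake, List.sum_append] at h1
  have h2 : (w ++ [c, d]).sum = 0 := h.2.1
  rw [List.sum_append] at h2
  simp at h1 h2
  have hd : d ≤ -1 := by omega
  have hc : c = 1 := by
    have hsuf : [c, d] <:+ w ++ [c, d] := ⟨w, rfl⟩
    have := List.isChain_pair.mp (h.1.2.suffix hsuf)
    omega
  exact ⟨w, d, by rw [hc], hd⟩

/- ### Values at small indices -/

lemma Sset_zero : Sset 0 = ∅ := by
  rw [Set.eq_empty_iff_forall_notMem]
  rintro p ⟨⟨hne, -⟩, hl⟩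
  exact hne (List.length_eq_zero_iff.1 hl)

lemma Sset_one : Sset 1 = ∅ := by
  rw [Set.eq_empty_iff_forall_notMem]
  rintro p ⟨⟨hne, ⟨hmem, -⟩, hsum, -⟩, hl⟩
  obtain ⟨a, rfl⟩ := List.length_eq_one_iff.1 hl
  simp at hsum
  rcases hmem a (by simp) with h | h <;> omega

lemma Eset_zero : Eset 0 = {[]} := by
  ext p
  constructor
  · rintro ⟨-, hl⟩
    simpa using List.length_eq_zero_iff.1 hl
  · rintro rfl
    exact ⟨⟨⟨by simp, List.isChain_nil⟩, by simp, by simp⟩, rfl⟩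

lemma Eset_eq_Sset {n : ℕ} (hn : 1 ≤ n) : Eset n = Sset n := by
  ext p
  constructor
  · rintro ⟨hp, hl⟩
    refine ⟨(isDAP_iff p).2 ⟨?_, hp⟩, hl⟩
    intro h
    rw [h] at hl
    simp at hl
    omega
  · exact fun h => Sset_subset_Eset n h

lemma Pset_two : Pset 2 = {[1, -1]} := by
  ext p
  constructor
  · rintro ⟨hp, hl, -⟩
    obtain ⟨hne, hw⟩ := (isDAP_iff p).1 hp
    obtain ⟨t, rfl⟩ := wdap_head hw hne
    obtain ⟨b, rfl⟩ : ∃ b, t = [b] := List.length_eq_one_iff.1 (by simpa using hl)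
    have := hw.2.1
    simp at this
    simp [this]
    omega
  · rintro rfl
    refine ⟨⟨by simp, ⟨?_, ?_⟩, by simp, ?_⟩, by simp, ?_⟩
    · rintro s hs
      simp at hs
      rcases hs with rfl | rfl <;> omega
    · exact List.isChain_pair.2 (Or.inl rfl)
    · intro i
      match i with
      | 0 => simp
      | 1 => simp
      | (n+2) => rw [List.take_of_length_le (by simp)]; simp
    · intro i h1 h2
      simp at h2
      interval_cases i
      simp

/- ### The bijection for primitive paths -/

def fmap (p : List ℤ) : List ℤ := 1 :: (p.dropLast ++ [p.getLast?.getD 0 - 1])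

lemma fmap_concat (w : List ℤ) (d : ℤ) :
    fmap (w ++ [1, d]) = 1 :: (w ++ [1, d - 1]) := by
  have h : w ++ [1, d] = (w ++ [1]) ++ [d] := by simp
  rw [fmap, h, List.dropLast_concat, List.getLast?_concat]
  simp

lemma take_sum_helper (w : List ℤ) (a : ℤ) {j : ℕ} (hj : j ≤ w.length + 1) :
    (w ++ [1, a]).take j = (w ++ [1]).take j := by
  have h : w ++ [1, a] = (w ++ [1]) ++ [a] := by simp
  rw [h, List.take_append_of_le_length (by simp [hj])]

lemma fmap_mem {m : ℕ} (hm : 3 ≤ m) {p : List ℤ} (hp : p ∈ Sset (m-1)) :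
    fmap p ∈ Pset m := by
  obtain ⟨hdap, hlen⟩ := hp
  obtain ⟨hne, hw⟩ := (isDAP_iff p).1 hdap
  obtain ⟨w, d, rfl, hd⟩ := wdap_last_two hw (by omega)
  have hwl : w.length = m - 3 := by simp at hlen; omega
  have hsum : w.sum + 1 + d = 0 := by
    have := hw.2.1; simp [List.sum_append] at this; omega
  rw [fmap_concat]
  have htk : ∀ j ≤ w.length + 1,
      ((w ++ [1, d-1]).take j).sum = ((w ++ [1, d]).take j).sum := by
    intro j hj
    rw [take_sum_helper w (d-1) hj, take_sum_helper w d hj]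
  refine ⟨⟨by simp, ⟨?_, ?_⟩, ?_, ?_⟩, ?_, ?_⟩
  · intro s hs
    simp at hs
    rcases hs with rfl | hs | rfl | rfl
    · exact Or.inl rfl
    · exact hw.1.1 s (by simp [hs])
    · exact Or.inl rfl
    · right; omega
  · have h1 : (1 : ℤ) :: (w ++ [1, d-1]) = (1 :: (w ++ [1])) ++ [d-1] := by simp
    rw [h1]; unfold List.Chain'; rw [List.isChain_append]
    refine ⟨?_, List.isChain_singleton _, ?_⟩
    · rw [List.isChain_cons]
      refine ⟨fun b _ => Or.inl rfl, ?_⟩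
      exact hw.1.2.prefix ⟨[d], by simp⟩
    · intro x hx y hy
      have h2 : (1 : ℤ) :: (w ++ [1]) = (1 :: w) ++ [1] := by simp
      rw [h2, List.getLast?_concat] at hx
      simp at hx
      subst hx
      exact Or.inl rfl
  · simp [List.sum_append]
    omega
  · intro i
    match i with
    | 0 => simp
    | (j+1) =>
      rw [List.take_succ_cons, List.sum_cons]
      rcases le_or_gt j (w.length + 1) with hj | hj
      · rw [htk j hj]
        have := hw.2.2 j
        omega
      · rw [List.take_of_length_le (by simp; omega)]
        simp [List.sum_append]
        omega
  · simp; omega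
  · intro i hi0 him
    simp at him
    obtain ⟨j, rfl⟩ : ∃ j, i = j + 1 := ⟨i - 1, by omega⟩
    rw [List.take_succ_cons, List.sum_cons, htk j (by omega)]
    have := hw.2.2 j
    omega

lemma fmap_surj {m : ℕ} (hm : 3 ≤ m) {q : List ℤ} (hq : q ∈ Pset m) :
    ∃ p ∈ Sset (m-1), fmap p = q := by
  obtain ⟨hdap, hlen, hprim⟩ := hq
  obtain ⟨hne, hw⟩ := (isDAP_iff q).1 hdap
  obtain ⟨v, e, hqe, he⟩ := wdap_last_two hw (by omega)
  have hvl : v.length = m - 2 := by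
    have := congrArg List.length hqe
    simp at this
    omega
  obtain ⟨t, hqt⟩ := wdap_head hw hne
  obtain ⟨a, v', rfl⟩ := List.exists_cons_of_ne_nil (l := v)
    (by intro h; rw [h] at hvl; simp at hvl; omega)
  have ha : a = 1 := by
    rw [hqt] at hqe
    simp at hqe
    exact hqe.1.symm
  subst ha
  have hq1 : q = 1 :: (v' ++ [1, e]) := by rw [hqe]; rfl
  have hv'l : v'.length = m - 3 := by simp at hvl; omega
  have hsumq : 1 + (v'.sum + 1 + e) = 0 := by
    have := hw.2.1
    rw [hq1] at this
    simp [List.sum_append] at this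
    omega
  have hvpos : 0 < 1 + v'.sum := by
    have h1 := hprim (m - 2) (by omega) (by omega)
    have h2 : q.take (m-2) = 1 :: v' := by
      rw [hq1]
      have : m - 2 = v'.length + 1 := by omega
      rw [this, List.take_succ_cons,
        List.take_append_of_le_length (le_refl _), List.take_length]
    rw [h2] at h1
    simpa using h1
  have he2 : e ≤ -2 := by omega
  refine ⟨v' ++ [1, e+1], ⟨(isDAP_iff _).2 ⟨by simp, ?_, ?_, ?_⟩, by simp; omega⟩, ?_⟩
  · constructor
    · intro s hs
      simp at hs
      rcases hs with hs | rfl | rfl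
      · exact hw.1.1 s (by rw [hq1]; simp [hs])
      · exact Or.inl rfl
      · right; omega
    · have h1 : v' ++ [1, e+1] = (v' ++ [1]) ++ [e+1] := by simp
      rw [h1]; unfold List.Chain'; rw [List.isChain_append]
      refine ⟨hw.1.2.infix ⟨[1], [e], by rw [hq1]; simp⟩, List.isChain_singleton _, ?_⟩
      intro x hx y hy
      rw [List.getLast?_concat] at hx
      simp at hx
      subst hx
      exact Or.inl rfl
  · simp [List.sum_append]; omega
  · intro i
    rcases le_or_gt i (v'.length + 1) with hi | hi
    · rw [take_sum_helper v' (e+1) hi]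
      have hp := hprim (i+1) (by omega) (by rw [hlen]; omega)
      rw [hq1, List.take_succ_cons, List.sum_cons, take_sum_helper v' e hi] at hp
      omega
    · rw [List.take_of_length_le (by simp; omega)]
      simp [List.sum_append]
      omega
  · rw [fmap_concat]
    have : e + 1 - 1 = e := by ring
    rw [this, hq1]

lemma card_Pset {m : ℕ} (hm : 3 ≤ m) : (Pset m).ncard = (Sset (m - 1)).ncard := by
  have hinj : Set.InjOn fmap (Sset (m-1)) := by
    rintro p₁ h₁ p₂ h₂ heq
    obtain ⟨w₁, d₁, he₁, -⟩ := wdap_last_two ((isDAP_iff _).1 h₁.1).2 (by rw [h₁.2]; omega)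
    obtain ⟨w₂, d₂, he₂, -⟩ := wdap_last_two ((isDAP_iff _).1 h₂.1).2 (by rw [h₂.2]; omega)
    have hl₁ : w₁.length = m - 3 := by
      have := h₁.2; rw [he₁] at this; simp at this; omega
    have hl₂ : w₂.length = m - 3 := by
      have := h₂.2; rw [he₂] at this; simp at this; omega
    rw [he₁, he₂, fmap_concat, fmap_concat] at heq
    simp only [List.cons.injEq, true_and] at heq
    obtain ⟨hww, hdd⟩ := List.append_inj heq (by omega)
    simp at hdd
    rw [he₁, he₂, hww]
    congr 1
    simp
    omega
  have himg : fmap '' Sset (m-1) = Pset m := by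
    ext q
    constructor
    · rintro ⟨p, hp, rfl⟩
      exact fmap_mem hm hp
    · intro hq
      obtain ⟨p, hp, hfp⟩ := fmap_surj hm hq
      exact ⟨p, hp, hfp⟩
  rw [← himg, Set.ncard_image_of_injOn hinj]

/- ### First-return decomposition -/

lemma Sset_eq_biUnion {n : ℕ} (hn : 2 ≤ n) :
    Sset n = ⋃ m ∈ Finset.Icc 2 n, Set.image2 (· ++ ·) (Pset m) (Eset (n - m)) := by
  ext p
  simp only [Set.mem_iUnion, Set.mem_image2, Finset.mem_Icc, exists_prop]
  constructor
  · rintro ⟨hdap, hlen⟩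
    obtain ⟨hne, hw⟩ := (isDAP_iff p).1 hdap
    have hQ : ∃ i, 0 < i ∧ (p.take i).sum = 0 := by
      refine ⟨n, by omega, ?_⟩
      rw [List.take_of_length_le (le_of_eq hlen)]
      exact hw.2.1
    obtain ⟨hm0, hmsum⟩ := Nat.find_spec hQ
    set m := Nat.find hQ with hmdef
    have hmin : ∀ i, i < m → 0 < i → (p.take i).sum ≠ 0 := by
      intro i hi hi0
      have := Nat.find_min hQ hi
      tauto
    have hmle : m ≤ n := Nat.find_le ⟨by omega, by
      rw [List.take_of_length_le (le_of_eq hlen)]; exact hw.2.1⟩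
    have hm2 : 2 ≤ m := by
      by_contra h
      have hm1 : m = 1 := by omega
      obtain ⟨t, rfl⟩ := wdap_head hw hne
      rw [hm1] at hmsum
      norm_num [List.take_cons] at hmsum
    refine ⟨m, ⟨hm2, hmle⟩, p.take m, ?_, p.drop m, ?_, List.take_append_drop m p⟩
    · refine ⟨(isDAP_iff _).2 ⟨?_, ⟨?_, ?_⟩, hmsum, ?_⟩, ?_, ?_⟩
      · apply List.ne_nil_of_length_pos
        simp [hlen]; omega
      · exact fun s hs => hw.1.1 s (List.mem_of_mem_take hs)
      · exact hw.1.2.prefix (List.take_prefix _ _)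
      · intro i
        rw [List.take_take]
        exact hw.2.2 _
      · simp [hlen]; omega
      · intro i hi0 hil
        simp [hlen] at hil
        rw [List.take_take, Nat.min_eq_left (by omega)]
        have h1 := hw.2.2 i
        have h2 := hmin i (by omega) hi0
        omega
    · refine ⟨⟨⟨?_, ?_⟩, ?_, ?_⟩, ?_⟩
      · exact fun s hs => hw.1.1 s (List.mem_of_mem_drop hs)
      · exact hw.1.2.suffix (List.drop_suffix _ _)
      · have := congrArg List.sum (List.take_append_drop m p)
        rw [List.sum_append, hw.2.1, hmsum] at this
        omega
      · intro j
        have h1 := hw.2.2 (m + j)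
        rw [List.take_add, List.sum_append, hmsum] at h1
        omega
      · simp [hlen]
  · rintro ⟨m, ⟨hm2, hmn⟩, q, ⟨hqdap, hqlen, hqprim⟩, r, ⟨hrw, hrlen⟩, rfl⟩
    obtain ⟨hqne, hqw⟩ := (isDAP_iff q).1 hqdap
    refine ⟨(isDAP_iff _).2 ⟨by simp [hqne], ⟨?_, ?_⟩, ?_, ?_⟩, by simp [hqlen, hrlen]; omega⟩
    · intro s hs
      rw [List.mem_append] at hs
      rcases hs with hs | hs
      · exact hqw.1.1 s hs
      · exact hrw.1.1 s hs
    · unfold List.Chain'; rw [List.isChain_append]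
      refine ⟨hqw.1.2, hrw.1.2, ?_⟩
      intro x hx y hy
      rcases List.eq_nil_or_concat r with rfl | -
      · simp at hy
      · have hrne : r ≠ [] := by
          intro h; rw [h] at hy; simp at hy
        obtain ⟨t, rfl⟩ := wdap_head hrw hrne
        simp at hy
        subst hy
        exact Or.inr rfl
    · rw [List.sum_append, hqw.2.1, hrw.2.1]; ring
    · intro i
      rw [List.take_append, List.sum_append]
      have h1 := hqw.2.2 i
      have h2 := hrw.2.2 (i - q.length)
      omega

lemma ncard_biUnion_finset {α ι : Type*} (t : Finset ι) (f : ι → Set α)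
    (hfin : ∀ i ∈ t, (f i).Finite)
    (hdisj : ∀ i ∈ t, ∀ j ∈ t, i ≠ j → Disjoint (f i) (f j)) :
    (⋃ i ∈ t, f i).ncard = ∑ i ∈ t, (f i).ncard := by
  classical
  induction t using Finset.induction_on with
  | empty => simp
  | @insert a t' ha ih =>
    have hdisj' : Disjoint (f a) (⋃ i ∈ t', f i) := by
      rw [Set.disjoint_left]
      intro x hxa hxu
      simp only [Set.mem_iUnion, exists_prop] at hxu
      obtain ⟨i, hi, hxi⟩ := hxu
      have hne : a ≠ i := by rintro rfl; exact ha hi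
      exact (Set.disjoint_left.1 (hdisj a (by simp) i (by simp [hi]) hne)) hxa hxi
    have hfin' : (⋃ i ∈ t', f i).Finite :=
      Set.Finite.biUnion (t'.finite_toSet) (fun i hi => hfin i (by simp [Finset.mem_coe.1 hi]))
    rw [Finset.set_biUnion_insert, Finset.sum_insert ha,
      Set.ncard_union_eq hdisj' (hfin a (by simp)) hfin',
      ih (fun i hi => hfin i (by simp [hi]))
        (fun i hi j hj hij => hdisj i (by simp [hi]) j (by simp [hj]) hij)]

lemma prim_no_common {m₁ m₂ : ℕ} (h12 : m₁ < m₂) (h2 : 2 ≤ m₁)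
    {q₁ r₁ q₂ r₂ : List ℤ} (hq₁ : q₁ ∈ Pset m₁) (hq₂ : q₂ ∈ Pset m₂)
    (he : q₁ ++ r₁ = q₂ ++ r₂) : False := by
  obtain ⟨hdap₁, hlen₁, -⟩ := hq₁
  obtain ⟨hdap₂, hlen₂, hprim₂⟩ := hq₂
  have h1 : (q₁ ++ r₁).take m₁ = q₁ := List.take_left' hlen₁
  have h2' : (q₂ ++ r₂).take m₁ = q₂.take m₁ :=
    List.take_append_of_le_length (by omega)
  have h3 : q₂.take m₁ = q₁ := by rw [← h2', ← he, h1]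
  have h4 := hprim₂ m₁ (by omega) (by omega)
  rw [h3] at h4
  rw [((isDAP_iff q₁).1 hdap₁).2.2.1] at h4
  exact lt_irrefl 0 h4

lemma card_image2 (m k : ℕ) :
    (Set.image2 (· ++ ·) (Pset m) (Eset k)).ncard = (Pset m).ncard * (Eset k).ncard := by
  rw [← Set.image_uncurry_prod]
  rw [Set.ncard_image_of_injOn ?_]
  · rw [← Nat.card_coe_set_eq, ← Nat.card_coe_set_eq, ← Nat.card_coe_set_eq,
      ← Nat.card_prod]
    exact Nat.card_congr (Equiv.Set.prod _ _)
  · rintro ⟨q₁, r₁⟩ ⟨hq₁, hr₁⟩ ⟨q₂, r₂⟩ ⟨hq₂, hr₂⟩ he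
    simp only [Function.uncurry] at he
    obtain ⟨h1, h2⟩ := List.append_inj he (by rw [hq₁.2.1, hq₂.2.1])
    simp [h1, h2]

lemma card_Sset {n : ℕ} (hn : 2 ≤ n) :
    (Sset n).ncard = ∑ m ∈ Finset.Icc 2 n, (Pset m).ncard * (Eset (n - m)).ncard := by
  rw [Sset_eq_biUnion hn, ncard_biUnion_finset]
  · exact Finset.sum_congr rfl fun m _ => card_image2 m (n - m)
  · intro m hm
    exact Set.Finite.image2 _ (Pset_finite m) (Eset_finite (n - m))
  · intro i hi j hj hij
    simp only [Finset.mem_Icc] at hi hj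
    rw [Set.disjoint_left]
    rintro x ⟨q₁, hq₁, r₁, hr₁, rfl⟩ ⟨q₂, hq₂, r₂, hr₂, he⟩
    rcases Nat.lt_or_ge i j with h | h
    · exact prim_no_common h hi.1 hq₁ hq₂ he.symm
    · exact prim_no_common (by omega) hj.1 hq₂ hq₁ he

/-- for `n ≥ 3`,
`a_n = a_{n-2} + a_{n-1} + ∑_{k=2}^{n-1} a_k a_{n-1-k}`. -/
theorem stmt0 : ∀ n : ℕ, 3 ≤ n →
    dapCount n = dapCount (n - 2) + dapCount (n - 1) +
      ∑ k ∈ Finset.Icc 2 (n - 1), dapCount k * dapCount (n - 1 - k) := by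
  intro n hn
  simp only [dapCount_eq]
  rw [card_Sset (by omega)]
  rw [show Finset.Icc 2 n = insert 2 (Finset.Icc 3 n) from by ext x; simp; omega,
    Finset.sum_insert (by simp)]
  rw [show Finset.Icc 3 n = insert n (Finset.Icc 3 (n-1)) from by ext x; simp; omega,
    Finset.sum_insert (by simp; omega)]
  rw [Pset_two, Set.ncard_singleton, Eset_eq_Sset (n := n - 2) (by omega)]
  rw [card_Pset hn, Nat.sub_self, Eset_zero, Set.ncard_singleton]
  rw [Finset.sum_congr rfl (fun m hm => show
      (Pset m).ncard * (Eset (n - m)).ncard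
        = (Sset (m-1)).ncard * (Sset (n - m)).ncard from by
    simp only [Finset.mem_Icc] at hm
    rw [card_Pset hm.1, Eset_eq_Sset (show 1 ≤ n - m by omega)])]
  rw [show Finset.Icc 2 (n-1) = insert (n-1) (Finset.Icc 2 (n-2)) from by ext x; simp; omega,
    Finset.sum_insert (by simp; omega)]
  rw [show n - 1 - (n - 1) = 0 from by omega, Sset_zero, Set.ncard_empty]
  have hre : ∑ m ∈ Finset.Icc 3 (n-1), (Sset (m-1)).ncard * (Sset (n-m)).ncard
      = ∑ k ∈ Finset.Icc 2 (n-2), (Sset k).ncard * (Sset (n-1-k)).ncard := by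
    apply Finset.sum_nbij' (fun m => m - 1) (fun k => k + 1)
    · intro a ha; simp only [Finset.mem_Icc] at ha ⊢; omega
    · intro a ha; simp only [Finset.mem_Icc] at ha ⊢; omega
    · intro a ha; simp only [Finset.mem_Icc] at ha; omega
    · intro a ha; simp only [Finset.mem_Icc] at ha; omega
    · intro a ha
      simp only [Finset.mem_Icc] at ha
      rw [show n - 1 - (a - 1) = n - a from by omega]
  rw [hre]
  ring
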